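/- Let (M_1,Q_1) be a random vector with M_1>0 almost surely, and let Y_∞ and Y_{1,∞} be random variables such that Y_∞ = Q_1 + M_1·Y_{1,∞}, Y_{1,∞} is independent of (M_1,Q_1), and Y_{1,∞} has the same law as Y_∞. If both Q_1 and Q_1/M_1 are unbounded from above (i.e. P(Q_1>u)>0 and P(Q_1/M_1>u)>0 for every u∈ℝ), then Y_∞ is unbounded from above, i.e. P(Y_∞>u)>0 for every u∈ℝ. -/

import Mathlib

open MeasureTheory ProbabilityTheory Real

/-- Let `Y∞ = Q + M * Y1∞` pathwise, where `M > 0` a.s., `Y1∞` is independent of `(M, Q)`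
and has the same law as `Y∞`. If `Q` and `Q/M` are both unbounded from above, then `Y∞` is
unbounded from above. -/
theorem fixed_point_unbounded_above
    {Ω : Type*} [MeasurableSpace Ω] (μ : Measure Ω) [IsProbabilityMeasure μ]
    (M Q Yinf Y1inf : Ω → ℝ)
    (hMmeas : Measurable M) (hQmeas : Measurable Q)
    (hYmeas : Measurable Yinf) (hY1meas : Measurable Y1inf)
    (hMpos : ∀ᵐ ω ∂μ, 0 < M ω)
    (hY : ∀ ω, Yinf ω = Q ω + M ω * Y1inf ω)
    (hindep : IndepFun Y1inf (fun ω => (M ω, Q ω)) μ)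
    (hlaw : Measure.map Y1inf μ = Measure.map Yinf μ)
    (hQunbdd : ∀ u : ℝ, 0 < μ {ω | Q ω > u})
    (hQMunbdd : ∀ u : ℝ, 0 < μ {ω | Q ω / M ω > u}) :
    ∀ u : ℝ, 0 < μ {ω | Yinf ω > u} := by
  -- law transfer
  have htrans : ∀ s : ℝ, μ {ω | Y1inf ω > s} = μ {ω | Yinf ω > s} := by
    intro s
    have h1 : {ω | Y1inf ω > s} = Y1inf ⁻¹' Set.Ioi s := rfl
    have h2 : {ω | Yinf ω > s} = Yinf ⁻¹' Set.Ioi s := rfl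
    rw [h1, h2, ← Measure.map_apply hY1meas measurableSet_Ioi,
      ← Measure.map_apply hYmeas measurableSet_Ioi, hlaw]
  intro u
  by_contra hcon
  have hnull : μ {ω | Yinf ω > u} = 0 := by
    simpa [pos_iff_ne_zero] using hcon
  set S : Set ℝ := {t | 0 < μ {ω | Yinf ω > t}} with hSdef
  have hmono : ∀ {a b : ℝ}, a ≤ b → μ {ω | Yinf ω > b} ≤ μ {ω | Yinf ω > a} := by
    intro a b hab
    exact measure_mono (fun ω hω => lt_of_le_of_lt hab hω)
  have hne : S.Nonempty := by
    by_contra hne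
    rw [Set.not_nonempty_iff_eq_empty] at hne
    have hall : ∀ t : ℝ, μ {ω | Yinf ω > t} = 0 := by
      intro t
      have ht := Set.eq_empty_iff_forall_notMem.mp hne t
      simp only [hSdef, Set.mem_setOf_eq] at ht
      simpa [pos_iff_ne_zero] using ht
    have hU : (⋃ n : ℕ, {ω | Yinf ω > -(n : ℝ)}) = Set.univ := by
      ext ω
      simp only [Set.mem_iUnion, Set.mem_setOf_eq, Set.mem_univ, iff_true]
      obtain ⟨n, hn⟩ := exists_nat_gt (-Yinf ω)
      exact ⟨n, by linarith⟩
    have : μ (Set.univ : Set Ω) = 0 := by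
      rw [← hU]
      exact measure_iUnion_null fun n => hall _
    simp at this
  have hbdd : BddAbove S := by
    refine ⟨u, fun t ht => ?_⟩
    by_contra hle
    push_neg at hle
    have : μ {ω | Yinf ω > t} = 0 :=
      le_antisymm (hnull ▸ hmono hle.le) (zero_le)
    simp only [hSdef, Set.mem_setOf_eq, this] at ht
    exact lt_irrefl _ ht
  set t0 : ℝ := sSup S with ht0def
  -- (a) below t0, positive measure
  have ha : ∀ ε : ℝ, 0 < ε → 0 < μ {ω | Yinf ω > t0 - ε} := by
    intro ε hε
    obtain ⟨b, hbS, hb⟩ := exists_lt_of_lt_csSup hne (by linarith : t0 - ε < t0)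
    exact lt_of_lt_of_le hbS (hmono hb.le)
  -- (b) at t0, measure zero
  have hb : μ {ω | Yinf ω > t0} = 0 := by
    by_contra hb0
    have hpos : 0 < μ {ω | Yinf ω > t0} := pos_iff_ne_zero.mpr hb0
    have hU : {ω | Yinf ω > t0} = ⋃ n : ℕ, {ω | Yinf ω > t0 + 1 / (n + 1)} := by
      ext ω
      simp only [Set.mem_iUnion, Set.mem_setOf_eq]
      constructor
      · intro h
        obtain ⟨n, hn⟩ := exists_nat_one_div_lt (by linarith : 0 < Yinf ω - t0)
        exact ⟨n, by push_cast at hn ⊢; linarith⟩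
      · rintro ⟨n, hn⟩
        have : (0 : ℝ) < 1 / (n + 1) := by positivity
        linarith
    rw [hU] at hpos
    have : ∃ n : ℕ, μ {ω | Yinf ω > t0 + 1 / (n + 1)} ≠ 0 := by
      by_contra hall
      push_neg at hall
      exact absurd (measure_iUnion_null hall) (pos_iff_ne_zero.mp hpos)
    obtain ⟨n, hn⟩ := this
    have hmem : t0 + 1 / (n + 1 : ℝ) ∈ S := pos_iff_ne_zero.mpr hn
    have := le_csSup hbdd hmem
    have hpos' : (0 : ℝ) < 1 / (n + 1) := by positivity
    linarith
  -- choose c and the target set T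
  obtain ⟨c, T, hTmeas, hclt, hc, harith⟩ :
      ∃ (c : ℝ) (T : Set (ℝ × ℝ)), MeasurableSet T ∧ c < t0 ∧
        0 < μ ((fun ω => (M ω, Q ω)) ⁻¹' T) ∧
        ∀ ω, 0 < M ω → c < Y1inf ω → (M ω, Q ω) ∈ T → t0 < Yinf ω := by
    rcases lt_or_ge 0 t0 with ht0 | ht0
    · refine ⟨t0 / 2, {p : ℝ × ℝ | t0 < p.2}, measurable_snd measurableSet_Ioi,
        by linarith, hQunbdd t0, ?_⟩
      intro ω hM h1 h2
      simp only [Set.mem_setOf_eq] at h2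
      rw [hY]
      have hy1 : 0 < Y1inf ω := lt_trans (by linarith) h1
      nlinarith [mul_pos hM hy1]
    · refine ⟨t0 - 1, {p : ℝ × ℝ | 1 - t0 < p.2 / p.1},
        (measurable_snd.div measurable_fst) measurableSet_Ioi, by linarith,
        hQMunbdd (1 - t0), ?_⟩
      intro ω hM h1 h2
      rw [hY]
      simp only [Set.mem_setOf_eq] at h2
      have hQM : (1 - t0) * M ω < Q ω := (lt_div_iff₀ hM).mp h2
      nlinarith [mul_lt_mul_of_pos_left h1 hM]
  -- independence
  have hind := hindep.measure_inter_preimage_eq_mul (Set.Ioi c) T measurableSet_Ioi hTmeas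
  have hEpos : 0 < μ (Y1inf ⁻¹' Set.Ioi c ∩ (fun ω => (M ω, Q ω)) ⁻¹' T) := by
    rw [hind]
    have h1 : 0 < μ (Y1inf ⁻¹' Set.Ioi c) := by
      have : μ (Y1inf ⁻¹' Set.Ioi c) = μ {ω | Yinf ω > c} := htrans c
      rw [this]
      have := ha (t0 - c) (by linarith)
      simpa using this
    exact ENNReal.mul_pos (pos_iff_ne_zero.mp h1) (pos_iff_ne_zero.mp hc)
  -- conclude
  have hfinal : 0 < μ {ω | Yinf ω > t0} := by
    refine lt_of_lt_of_le hEpos (measure_mono_ae ?_)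
    filter_upwards [hMpos] with ω hM hω
    exact harith ω hM hω.1 hω.2
  exact absurd hb (pos_iff_ne_zero.mp hfinal)
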